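/- Let a_1,...,a_N be pairwise distinct elements of a field and t ≥ N an integer. Then ∑_{ν=1}^N a_ν^t / ∏_{μ≠ν}(a_ν - a_μ) equals the complete homogeneous symmetric polynomial of degree t - N + 1 in a_1,...,a_N, i.e., ∑_{i_1+...+i_N = t-N+1, i_j ≥ 0} a_1^{i_1} ⋯ a_N^{i_N}. -/

import Mathlib

open Polynomial Finset

lemma key_eval {K : Type*} [Field K] {N : ℕ} (a : Fin N → K) (ha : Function.Injective a)
    (lam : Fin N) (hlam : a lam ≠ 0) :
    Polynomial.eval (a lam)⁻¹
      (∑ ν : Fin N, Polynomial.C ((∏ μ ∈ univ.erase ν, (a ν - a μ))⁻¹ * a ν ^ (N-1)) *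
        ∏ μ ∈ univ.erase ν, (1 - Polynomial.C (a μ) * Polynomial.X)) = 1 := by
  rw [eval_finset_sum]
  rw [Finset.sum_eq_single lam]
  · simp only [eval_mul, eval_C, eval_prod, eval_sub, eval_one, eval_mul, eval_C, eval_X]
    have hfac : ∀ μ ∈ univ.erase lam, (1 - a μ * (a lam)⁻¹) = (a lam - a μ) * (a lam)⁻¹ := by
      intro μ _
      field_simp
    rw [Finset.prod_congr rfl hfac, Finset.prod_mul_distrib, Finset.prod_const]
    have hcard : (univ.erase lam).card = N - 1 := by
      rw [Finset.card_erase_of_mem (Finset.mem_univ _), Finset.card_univ, Fintype.card_fin]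
    rw [hcard]
    have hprod : (∏ μ ∈ univ.erase lam, (a lam - a μ)) ≠ 0 := by
      rw [Finset.prod_ne_zero_iff]
      intro μ hμ
      exact sub_ne_zero.2 (fun h => (Finset.mem_erase.1 hμ).1 (ha h.symm))
    field_simp
    rw [← mul_pow, mul_one_div_cancel hlam, one_pow]
  · intro ν _ hν
    simp only [eval_mul, eval_C, eval_prod, eval_sub, eval_one, eval_mul, eval_C, eval_X]
    have hz : ∏ x ∈ univ.erase ν, (1 - a x * (a lam)⁻¹) = 0 :=
      Finset.prod_eq_zero (Finset.mem_erase.2 ⟨hν.symm, Finset.mem_univ lam⟩)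
        (by rw [mul_inv_cancel₀ hlam]; ring)
    rw [hz, mul_zero]
  · intro h; exact absurd (Finset.mem_univ lam) h


lemma key_poly {K : Type*} [Field K] {N : ℕ} (hN : 0 < N) (a : Fin N → K)
    (ha : Function.Injective a) :
    (∑ ν : Fin N, Polynomial.C ((∏ μ ∈ univ.erase ν, (a ν - a μ))⁻¹ * a ν ^ (N-1)) *
        ∏ μ ∈ univ.erase ν, (1 - Polynomial.C (a μ) * Polynomial.X)) = 1 := by
  classical
  set p : Polynomial K := ∑ ν : Fin N, Polynomial.C ((∏ μ ∈ univ.erase ν, (a ν - a μ))⁻¹ * a ν ^ (N-1)) *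
        ∏ μ ∈ univ.erase ν, (1 - Polynomial.C (a μ) * Polynomial.X) with hp
  have hdeg1 : ∀ c : K, (1 - Polynomial.C c * Polynomial.X).natDegree ≤ 1 := by
    intro c
    refine (natDegree_sub_le _ _).trans ?_
    simp only [natDegree_one, max_le_iff]
    exact ⟨Nat.zero_le 1, (natDegree_C_mul_le c X).trans (by simp)⟩
  have hcarde : ∀ ν : Fin N, (univ.erase ν).card = N - 1 := by
    intro ν
    rw [Finset.card_erase_of_mem (Finset.mem_univ _), Finset.card_univ, Fintype.card_fin]
  by_cases hzero : ∀ ν, a ν ≠ 0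
  · -- all values nonzero; use N interpolation points (a ν)⁻¹
    have hcard : (univ.image fun ν => (a ν)⁻¹).card = N := by
      rw [Finset.card_image_of_injective _ (fun x y h => ha (inv_injective h)), Finset.card_univ,
        Fintype.card_fin]
    have hdegp : p.natDegree ≤ N - 1 := by
      refine natDegree_sum_le_of_forall_le _ _ (fun ν _ => ?_)
      refine (natDegree_C_mul_le _ _).trans ?_
      refine (natDegree_prod_le _ _).trans ?_
      have hsum : ∑ μ ∈ univ.erase ν, (1 - Polynomial.C (a μ) * Polynomial.X).natDegree
          ≤ ∑ _μ ∈ univ.erase ν, 1 := Finset.sum_le_sum (fun μ _ => hdeg1 (a μ))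
      rw [Finset.sum_const, smul_eq_mul, mul_one, hcarde] at hsum
      exact hsum
    have h0 : p - 1 = 0 := by
      by_cases hp0 : p - 1 = 0
      · exact hp0
      refine Polynomial.eq_zero_of_degree_lt_of_eval_finset_eq_zero (s := univ.image fun ν => (a ν)⁻¹) ?_ ?_
      · rw [hcard, ← Polynomial.natDegree_lt_iff_degree_lt hp0]
        have := natDegree_sub_le p 1
        simp only [natDegree_one] at this
        omega
      · intro x hx
        obtain ⟨ν, _, rfl⟩ := Finset.mem_image.1 hx
        rw [eval_sub, eval_one, key_eval a ha ν (hzero ν), sub_self]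
    exact sub_eq_zero.1 h0
  · push_neg at hzero
    obtain ⟨ν₀, hν₀⟩ := hzero
    rcases Nat.lt_or_ge N 2 with h1 | h2
    · -- N = 1
      have hN1 : N = 1 := by omega
      subst hN1
      rw [hp, Fin.sum_univ_one]
      have he : (univ : Finset (Fin 1)).erase 0 = ∅ := by decide
      have he2 : (univ : Finset (Fin 1)).erase ν₀ = ∅ := by
        rw [Subsingleton.elim ν₀ 0]; exact he
      rw [Subsingleton.elim (0 : Fin 1) ν₀, he2]
      simp
    · -- N ≥ 2
      have hterm0 : Polynomial.C ((∏ μ ∈ univ.erase ν₀, (a ν₀ - a μ))⁻¹ * a ν₀ ^ (N-1)) *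
          ∏ μ ∈ univ.erase ν₀, (1 - Polynomial.C (a μ) * Polynomial.X) = 0 := by
        rw [hν₀, zero_pow (by omega : N - 1 ≠ 0), mul_zero, Polynomial.C_0, zero_mul]
      have hps : p = ∑ ν ∈ univ.erase ν₀,
          Polynomial.C ((∏ μ ∈ univ.erase ν, (a ν - a μ))⁻¹ * a ν ^ (N-1)) *
            ∏ μ ∈ univ.erase ν, (1 - Polynomial.C (a μ) * Polynomial.X) :=
        by rw [hp, ← Finset.sum_erase (f := fun ν => Polynomial.C ((∏ μ ∈ univ.erase ν, (a ν - a μ))⁻¹ * a ν ^ (N-1)) *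
            ∏ μ ∈ univ.erase ν, (1 - Polynomial.C (a μ) * Polynomial.X)) _ hterm0]
      have hdegp : p.natDegree ≤ N - 2 := by
        rw [hps]
        refine natDegree_sum_le_of_forall_le _ _ (fun ν hν => ?_)
        have hν₀mem : ν₀ ∈ univ.erase ν :=
          Finset.mem_erase.2 ⟨((Finset.mem_erase.1 hν).1 ∘ Eq.symm), Finset.mem_univ _⟩
        refine (natDegree_C_mul_le _ _).trans ?_
        rw [← Finset.mul_prod_erase _ _ hν₀mem, hν₀, Polynomial.C_0, zero_mul, sub_zero, one_mul]
        refine (natDegree_prod_le _ _).trans ?_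
        have hsum : ∑ μ ∈ (univ.erase ν).erase ν₀, (1 - Polynomial.C (a μ) * Polynomial.X).natDegree
            ≤ ∑ _μ ∈ (univ.erase ν).erase ν₀, 1 := Finset.sum_le_sum (fun μ _ => hdeg1 (a μ))
        rw [Finset.sum_const, smul_eq_mul, mul_one,
          Finset.card_erase_of_mem hν₀mem, hcarde] at hsum
        exact hsum
      have hcard : ((univ.erase ν₀).image fun ν => (a ν)⁻¹).card = N - 1 := by
        rw [Finset.card_image_of_injective _ (fun x y h => ha (inv_injective h)),
          Finset.card_erase_of_mem (Finset.mem_univ _), Finset.card_univ, Fintype.card_fin]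
      have h0 : p - 1 = 0 := by
        by_cases hp0 : p - 1 = 0
        · exact hp0
        refine Polynomial.eq_zero_of_degree_lt_of_eval_finset_eq_zero
          (s := (univ.erase ν₀).image fun ν => (a ν)⁻¹) ?_ ?_
        · rw [hcard, ← Polynomial.natDegree_lt_iff_degree_lt hp0]
          have := natDegree_sub_le p 1
          simp only [natDegree_one] at this
          omega
        · intro x hx
          obtain ⟨ν, hν, rfl⟩ := Finset.mem_image.1 hx
          have hνne : a ν ≠ 0 := fun h =>
            (Finset.mem_erase.1 hν).1 (ha (h.trans hν₀.symm))
          rw [eval_sub, eval_one, key_eval a ha ν hνne, sub_self]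
      exact sub_eq_zero.1 h0

lemma geom_inv {K : Type*} [Field K] (c : K) :
    (1 - PowerSeries.C c * PowerSeries.X) * PowerSeries.mk (fun k => c ^ k) = 1 := by
  ext n
  cases n with
  | zero => simp
  | succ n =>
    have h1 : ((1 : PowerSeries K) - PowerSeries.C c * PowerSeries.X) * PowerSeries.mk (fun k => c ^ k)
        = PowerSeries.mk (fun k => c ^ k) - PowerSeries.C c
            * (PowerSeries.X * PowerSeries.mk (fun k => c ^ k)) := by ring
    rw [h1]
    simp [PowerSeries.coeff_succ_X_mul, pow_succ, mul_comm]

theorem stmt_3 {K : Type*} [Field K] (N : ℕ) (a : Fin N → K)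
    (ha : Function.Injective a) (t : ℕ) (ht : N ≤ t) :
    ∑ ν : Fin N, a ν ^ t / ∏ μ ∈ Finset.univ.erase ν, (a ν - a μ) =
      ∑ i ∈ Finset.Nat.antidiagonalTuple N (t - N + 1), ∏ j, a j ^ i j := by
  classical
  cases N with
  | zero => simp [Finset.Nat.antidiagonalTuple_zero_succ]
  | succ n =>
  have hN : 0 < n + 1 := Nat.succ_pos n
  have hmt : t - (n + 1) + 1 = t - n := by omega
  rw [hmt]
  set m : ℕ := t - n with hm
  have hE : (∑ ν : Fin (n+1), PowerSeries.C ((∏ μ ∈ univ.erase ν, (a ν - a μ))⁻¹ * a ν ^ (n+1-1)) *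
        ∏ μ ∈ univ.erase ν, (1 - PowerSeries.C (a μ) * PowerSeries.X)) = 1 := by
    have h := congrArg (Polynomial.coeToPowerSeries.ringHom (R := K)) (key_poly hN a ha)
    simpa [map_sum, map_mul, map_prod, map_sub, map_one] using h
  set G : PowerSeries K := ∏ ν : Fin (n+1), PowerSeries.mk (fun k => a ν ^ k) with hG
  have hBG : G = ∑ ν : Fin (n+1),
      PowerSeries.C ((∏ μ ∈ univ.erase ν, (a ν - a μ))⁻¹ * a ν ^ (n+1-1)) *
        PowerSeries.mk (fun k => a ν ^ k) := by
    calc G = (∑ ν : Fin (n+1), PowerSeries.C ((∏ μ ∈ univ.erase ν, (a ν - a μ))⁻¹ * a ν ^ (n+1-1)) *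
        ∏ μ ∈ univ.erase ν, (1 - PowerSeries.C (a μ) * PowerSeries.X)) * G := by
          rw [hE, one_mul]
      _ = ∑ ν : Fin (n+1),
          PowerSeries.C ((∏ μ ∈ univ.erase ν, (a ν - a μ))⁻¹ * a ν ^ (n+1-1)) *
            PowerSeries.mk (fun k => a ν ^ k) := by
          rw [Finset.sum_mul]
          refine Finset.sum_congr rfl fun ν _ => ?_
          have hGsplit : G = PowerSeries.mk (fun k => a ν ^ k) *
              ∏ μ ∈ univ.erase ν, PowerSeries.mk (fun k => a μ ^ k) :=
            (Finset.mul_prod_erase _ _ (Finset.mem_univ ν)).symm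
          rw [hGsplit, show ∀ C P M Mk : PowerSeries K, C * P * (Mk * M) = C * Mk * (P * M) from
            fun _ _ _ _ => by ring, ← Finset.prod_mul_distrib]
          rw [Finset.prod_congr rfl (fun μ _ => geom_inv (a μ)), Finset.prod_const_one, mul_one]
  have hcoeff := congrArg (PowerSeries.coeff m) hBG
  rw [map_sum] at hcoeff
  have hR : ∀ ν : Fin (n+1), PowerSeries.coeff m
      (PowerSeries.C ((∏ μ ∈ univ.erase ν, (a ν - a μ))⁻¹ * a ν ^ (n+1-1)) *
        PowerSeries.mk (fun k => a ν ^ k)) = a ν ^ t / ∏ μ ∈ univ.erase ν, (a ν - a μ) := by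
    intro ν
    rw [PowerSeries.coeff_C_mul, PowerSeries.coeff_mk, div_eq_mul_inv, mul_assoc, ← pow_add,
      show n + 1 - 1 + m = t by omega, mul_comm]
  have hL : PowerSeries.coeff m G =
      ∑ i ∈ Finset.Nat.antidiagonalTuple (n+1) m, ∏ j, a j ^ i j := by
    rw [hG, PowerSeries.coeff_prod]
    refine Finset.sum_nbij' (fun l => (l : Fin (n+1) → ℕ)) (fun f => Finsupp.equivFunOnFinite.symm f)
      ?_ ?_ ?_ ?_ ?_
    · intro l hl
      rw [Finset.mem_finsuppAntidiag] at hl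
      rw [Finset.Nat.mem_antidiagonalTuple]
      exact hl.1
    · intro f hf
      rw [Finset.Nat.mem_antidiagonalTuple] at hf
      rw [Finset.mem_finsuppAntidiag]
      exact ⟨by simpa using hf, Finset.subset_univ _⟩
    · intro l _; exact Finsupp.equivFunOnFinite.symm_apply_apply l
    · intro f _; exact Finsupp.equivFunOnFinite.apply_symm_apply f
    · intro l _
      exact Finset.prod_congr rfl fun i _ => by rw [PowerSeries.coeff_mk]
  rw [hL] at hcoeff
  rw [hcoeff]
  exact Finset.sum_congr rfl fun ν _ => (hR ν).symm
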